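/- arXiv:1904.01468 — 4 statements merged into one kernel-verified Lean document; each statement's English description precedes it below -/
import Mathlib

section
/- Let E be a separable complex Hilbert space and H a bounded self-adjoint operator on E. Suppose there exist s > 0 and a finite non-empty set Λ ⊆ (0, ∞) such that the spectrum of H is contained in [−s, 0] ∪ Λ, and every λ ∈ Λ is an isolated point of the spectrum that is an eigenvalue of H with finite-dimensional eigenspace. Let λ₀ = max Λ. Then for every m₀ ∈ E, the solution m(t) = exp(tH) m₀ of the Cauchy problem m'(t) = H m(t), m(0) = m₀, satisfies: e^{−λ₀ t} m(t) converges in norm, as t → ∞, to P m₀, where P is the orthogonal projection of E onto the eigenspace ker(H − λ₀·I). -/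
set_option maxHeartbeats 1000000


open MeasureTheory Filter

open scoped InnerProductSpace

section aux

/-- Continuity on a set where `lam0` is an isolated point, for functions continuous away
from `lam0`. -/
lemma continuousOn_of_isolated {S : Set ℝ} {lam0 μ : ℝ} (hμ : μ < lam0)
    (hS : ∀ x ∈ S, x = lam0 ∨ x ≤ μ) (f : ℝ → ℝ)
    (hf : ∀ x : ℝ, x ≠ lam0 → ContinuousAt f x) : ContinuousOn f S := by
  intro x hx
  rcases hS x hx with rfl | hxμ
  · have hball : Metric.ball x (x - μ) ∈ nhdsWithin x S :=
      nhdsWithin_le_nhds (Metric.ball_mem_nhds _ (by linarith))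
    have hev : ∀ᶠ y in nhdsWithin x S, f y = f x := by
      filter_upwards [hball, self_mem_nhdsWithin] with y hy hyS
      rcases hS y hyS with rfl | hyμ
      · rfl
      · exfalso
        rw [Metric.mem_ball, Real.dist_eq, abs_lt] at hy
        linarith
    exact (tendsto_congr' hev).mpr tendsto_const_nhds
  · exact (hf x (by intro h; rw [h] at hxμ; linarith)).continuousWithinAt

end aux

/-- For a bounded self-adjoint operator whose spectrum consists of a part in `[-s,0]`
together with finitely many isolated positive eigenvalues with finite-dimensional
eigenspaces, `e^{-λ₀ t} exp(tH) m₀` converges to the orthogonal projection of `m₀`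
onto the eigenspace of the largest eigenvalue `λ₀`. -/
theorem exp_tendsto_top_eigenprojection
    (E : Type*) [NormedAddCommGroup E] [InnerProductSpace ℂ E] [CompleteSpace E]
    [TopologicalSpace.SeparableSpace E]
    (H : E →L[ℂ] E) (hsa : IsSelfAdjoint H)
    (s : ℝ) (hs : 0 < s)
    (Λ : Finset ℝ) (hΛne : Λ.Nonempty) (hΛpos : ∀ lam ∈ Λ, (0 : ℝ) < lam)
    (hspec : spectrum ℂ H ⊆ (fun r : ℝ => (r : ℂ)) '' (Set.Icc (-s) 0 ∪ ↑Λ))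
    (hiso : ∀ lam ∈ Λ, nhdsWithin (lam : ℂ) (spectrum ℂ H \ {(lam : ℂ)}) = ⊥)
    (heigen : ∀ lam ∈ Λ, ∃ v : E, v ≠ 0 ∧ H v = (lam : ℂ) • v)
    (hfin : ∀ lam ∈ Λ,
      FiniteDimensional ℂ ↥(LinearMap.ker ((H - (lam : ℂ) • (1 : E →L[ℂ] E) : E →L[ℂ] E) : E →ₗ[ℂ] E)))
    (lam0 : ℝ) (hlam0 : lam0 = Λ.max' hΛne) (m0 : E) :
    ∃ w : E, w ∈ LinearMap.ker ((H - (lam0 : ℂ) • (1 : E →L[ℂ] E) : E →L[ℂ] E) : E →ₗ[ℂ] E) ∧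
      m0 - w ∈ (LinearMap.ker ((H - (lam0 : ℂ) • (1 : E →L[ℂ] E) : E →L[ℂ] E) : E →ₗ[ℂ] E))ᗮ ∧
      Tendsto (fun t : ℝ => Real.exp (-(lam0 * t)) • (NormedSpace.exp ((t : ℂ) • H)) m0)
        atTop (nhds w) := by
  have hlam0Λ : lam0 ∈ Λ := hlam0 ▸ Λ.max'_mem hΛne
  have hlam0pos : (0:ℝ) < lam0 := hΛpos lam0 hlam0Λ
  -- the "second largest" spectral value
  set K : Finset ℝ := insert (0:ℝ) (Λ.erase lam0) with hK
  have hKne : K.Nonempty := Finset.insert_nonempty _ _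
  set μ : ℝ := K.max' hKne with hμ
  have hμlt : μ < lam0 := by
    rw [hμ]
    refine Finset.max'_lt_iff _ _ |>.mpr fun y hy => ?_
    rcases Finset.mem_insert.mp hy with rfl | hy
    · exact hlam0pos
    · obtain ⟨hne, hyΛ⟩ := Finset.mem_erase.mp hy
      exact lt_of_le_of_ne (hlam0 ▸ Λ.le_max' y hyΛ) hne
  have h0μ : (0:ℝ) ≤ μ := Finset.le_max' _ _ (Finset.mem_insert_self _ _)
  -- real spectrum is contained in {lam0} ∪ (-∞, μ]
  have hkey : ∀ x ∈ spectrum ℝ H, x = lam0 ∨ x ≤ μ := by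
    intro x hx
    have hxC : (x:ℂ) ∈ spectrum ℂ H := (spectrum.algebraMap_mem_iff ℂ).mpr hx
    obtain ⟨r, hr, hrx⟩ := hspec hxC
    have hrx' : r = x := by
      have : (r:ℂ) = (x:ℂ) := hrx
      exact_mod_cast this
    subst hrx'
    rcases hr with hr | hr
    · exact Or.inr (hr.2.trans h0μ)
    · rcases eq_or_ne r lam0 with h | h
      · exact Or.inl h
      · exact Or.inr (Finset.le_max' _ _ (Finset.mem_insert_of_mem
          (Finset.mem_erase.mpr ⟨h, hr⟩)))
  -- the spectral projection and related functions
  set g : ℝ → ℝ := fun x => if x = lam0 then 1 else 0 with hg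
  set h : ℝ → ℝ := fun x => if x = lam0 then 0 else (x - lam0)⁻¹ with hh
  have hgc : ContinuousOn g (spectrum ℝ H) := by
    refine continuousOn_of_isolated hμlt hkey g fun x hx => ?_
    have hev : ∀ᶠ y in nhds x, g y = 0 := by
      filter_upwards [isOpen_ne.mem_nhds hx] with y hy
      simp [hg, hy]
    exact (continuousAt_congr hev).mpr continuousAt_const
  have hhc : ContinuousOn h (spectrum ℝ H) := by
    refine continuousOn_of_isolated hμlt hkey h fun x hx => ?_
    have hne : x - lam0 ≠ 0 := sub_ne_zero.mpr hx
    have hev : ∀ᶠ y in nhds x, h y = (y - lam0)⁻¹ := by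
      filter_upwards [isOpen_ne.mem_nhds hx] with y hy
      simp [hh, hy]
    exact (continuousAt_congr hev).mpr ((continuousAt_id.sub continuousAt_const).inv₀ hne)
  set P : E →L[ℂ] E := cfc g H with hP
  have hPsa : IsSelfAdjoint P := cfc_predicate g H
  -- lam0 • 1 is the algebra map of lam0
  have halg : (lam0 : ℂ) • (1 : E →L[ℂ] E) = algebraMap ℝ (E →L[ℂ] E) lam0 := by
    rw [IsScalarTower.algebraMap_apply ℝ ℂ (E →L[ℂ] E), Algebra.algebraMap_eq_smul_one]
    norm_num
  set T : E →L[ℂ] E := H - (lam0 : ℂ) • (1 : E →L[ℂ] E) with hT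
  have hTc : T = cfc (fun x : ℝ => x - lam0) H := by
    rw [cfc_sub (fun x : ℝ => x) (fun _ => lam0) H, cfc_id' ℝ H, cfc_const lam0 H, hT, halg]
  -- T * P = 0
  have hTP : T * P = 0 := by
    rw [hTc, hP, ← cfc_mul _ _ H (by fun_prop) hgc]
    have hzero : (fun x : ℝ => (x - lam0) * g x) = 0 := by
      funext x
      rcases eq_or_ne x lam0 with hx | hx
      · simp [hg, hx]
      · simp [hg, hx]
    rw [hzero, cfc_zero]
  -- (1 - P) = cfc h H * T
  have h1P : (1 : E →L[ℂ] E) - P = cfc h H * T := by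
    rw [hTc, hP, ← cfc_mul _ _ H hhc (by fun_prop), ← cfc_one (R := ℝ) H hsa,
      ← cfc_sub _ _ H (by fun_prop) hgc]
    refine cfc_congr fun x hx => ?_
    rcases eq_or_ne x lam0 with hxe | hxne
    · simp [hg, hh, hxe]
    · have hne : x - lam0 ≠ 0 := sub_ne_zero.mpr hxne
      simp [hg, hh, hxne, inv_mul_cancel₀ hne]
  refine ⟨P m0, ?_, ?_, ?_⟩
  · -- P m0 ∈ ker T
    rw [LinearMap.mem_ker]
    have h0 : (T * P) m0 = (0 : E →L[ℂ] E) m0 := by rw [hTP]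
    rw [ContinuousLinearMap.mul_apply, ContinuousLinearMap.zero_apply] at h0
    exact h0
  · -- m0 - P m0 ∈ (ker T)ᗮ
    rw [Submodule.mem_orthogonal]
    intro v hv
    rw [LinearMap.mem_ker] at hv
    have hPv : P v = v := by
      have h0 : ((1 : E →L[ℂ] E) - P) v = (cfc h H * T) v := by rw [h1P]
      rw [ContinuousLinearMap.sub_apply, ContinuousLinearMap.one_apply,
        ContinuousLinearMap.mul_apply, show T v = 0 from hv, map_zero, sub_eq_zero] at h0
      exact h0.symm
    have hadj : ⟪v, P m0⟫_ℂ = ⟪P v, m0⟫_ℂ := by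
      conv_lhs => rw [← hPsa.adjoint_eq]
      rw [ContinuousLinearMap.adjoint_inner_right]
    rw [inner_sub_right, hadj, hPv, sub_self]
  · -- convergence
    have hexp : ∀ t : ℝ, Real.exp (-(lam0 * t)) • (NormedSpace.exp ((t:ℂ) • H))
        = cfc (fun x : ℝ => Real.exp (t * (x - lam0))) H := by
      intro t
      have h1 : (t:ℂ) • H = t • H := by norm_num [← Complex.coe_smul]
      have h2 : IsSelfAdjoint (t • H) := IsSelfAdjoint.smul (star_trivial t) hsa
      rw [h1, ← CFC.real_exp_eq_normedSpace_exp h2,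
        ← cfc_comp_const_mul t Real.exp H (by fun_prop),
        ← cfc_smul (Real.exp (-(lam0 * t))) _ H (by fun_prop)]
      refine cfc_congr fun x _ => ?_
      rw [smul_eq_mul, ← Real.exp_add]
      ring_nf
    have hbound : ∀ t : ℝ, 0 ≤ t →
        ‖cfc (fun x : ℝ => Real.exp (t * (x - lam0))) H - P‖ ≤ Real.exp (t * (μ - lam0)) := by
      intro t ht
      rw [hP, ← cfc_sub _ _ H (by fun_prop) hgc]
      refine norm_cfc_le (Real.exp_nonneg _) fun x hx => ?_
      rcases hkey x hx with hxe | hxμ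
      · simp [hg, hxe, Real.exp_nonneg]
      · have hxne : x ≠ lam0 := by intro e; rw [e] at hxμ; linarith
        rw [hg]
        simp only [hxne, if_false, sub_zero, Real.norm_eq_abs,
          abs_of_pos (Real.exp_pos _)]
        exact Real.exp_le_exp.mpr (mul_le_mul_of_nonneg_left (by linarith) ht)
    rw [tendsto_iff_norm_sub_tendsto_zero]
    have hb0 : Tendsto (fun t : ℝ => Real.exp (t * (μ - lam0)) * ‖m0‖) atTop (nhds 0) := by
      have h1 : Tendsto (fun t : ℝ => t * (μ - lam0)) atTop atBot :=
        tendsto_id.atTop_mul_const_of_neg (by linarith)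
      have h2 := (Real.tendsto_exp_atBot.comp h1).mul_const ‖m0‖
      simpa using h2
    refine squeeze_zero' (Eventually.of_forall fun t => norm_nonneg _) ?_ hb0
    filter_upwards [eventually_ge_atTop (0:ℝ)] with t ht
    have heq : Real.exp (-(lam0 * t)) • (NormedSpace.exp ((t:ℂ) • H)) m0 - P m0
        = (cfc (fun x : ℝ => Real.exp (t * (x - lam0))) H - P) m0 := by
      rw [ContinuousLinearMap.sub_apply, ← hexp t, ContinuousLinearMap.smul_apply]
    rw [heq]
    calc ‖(cfc (fun x : ℝ => Real.exp (t * (x - lam0))) H - P) m0‖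
        ≤ ‖cfc (fun x : ℝ => Real.exp (t * (x - lam0))) H - P‖ * ‖m0‖ :=
          ContinuousLinearMap.le_opNorm _ _
      _ ≤ Real.exp (t * (μ - lam0)) * ‖m0‖ :=
          mul_le_mul_of_nonneg_right (hbound t ht) (norm_nonneg _)
end

section
/- Let E be a complex Hilbert space and H a bounded self-adjoint operator on E whose spectrum is contained in (−∞, −s] for some s > 0 (in particular H is invertible). Let ν₀ ∈ E and let f : [0, ∞) → E be continuous with f(t) → f* in norm as t → ∞. Then the solution ν(t) = exp(tH) ν₀ + ∫_0^t exp((t−σ)H) f(σ) dσ of the Cauchy problem ν'(t) = H ν(t) + f(t), ν(0) = ν₀, converges in norm to −H^{−1} f* as t → ∞. -/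
open Filter intervalIntegral Pointwise

section Aux

variable {E : Type*} [NormedAddCommGroup E] [InnerProductSpace ℂ E] [CompleteSpace E]

private lemma hasDerivAt_expG (H : E →L[ℂ] E) (t : ℝ) :
    HasDerivAt (fun u : ℝ => NormedSpace.exp ((u : ℂ) • H))
      (H * NormedSpace.exp ((t : ℂ) • H)) t := by
  have h := hasDerivAt_exp_smul_const' (𝕂 := ℂ) H (t : ℂ)
  have h2 := h.scomp t Complex.ofRealCLM.hasDerivAt
  simpa [Function.comp_def] using h2

private lemma contG (H : E →L[ℂ] E) :
    Continuous (fun u : ℝ => NormedSpace.exp ((u : ℂ) • H)) := by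
  exact continuous_iff_continuousAt.2 fun x =>
    (NormedSpace.exp_analytic (𝕂 := ℂ) _).continuousAt.comp
      ((by fun_prop : Continuous fun u : ℝ => (u : ℂ) • H).continuousAt)

private lemma exp_norm_le (H : E →L[ℂ] E) (hsa : IsSelfAdjoint H)
    {s : ℝ} (hs : 0 < s)
    (hspec : spectrum ℂ H ⊆ (fun r : ℝ => (r : ℂ)) '' Set.Iic (-s))
    {t : ℝ} (ht : 0 ≤ t) :
    ‖NormedSpace.exp ((t : ℂ) • H)‖ ≤ Real.exp (-(s * t)) := by
  rcases ht.eq_or_lt with rfl | htpos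
  · simp only [Complex.ofReal_zero, zero_smul, NormedSpace.exp_zero, mul_zero, neg_zero,
      Real.exp_zero]
    simpa [ContinuousLinearMap.one_def] using ContinuousLinearMap.norm_id_le (E := E)
  · have hsmul : ((t : ℂ) • H) = t • H := by norm_num
    have hsa' : IsSelfAdjoint (t • H) := by
      simp only [IsSelfAdjoint, star_smul, star_trivial, hsa.star_eq]
    rw [hsmul, ← CFC.real_exp_eq_normedSpace_exp hsa']
    refine norm_cfc_le (Real.exp_nonneg _) fun x hx => ?_
    have hxC : (x : ℂ) ∈ spectrum ℂ (t • H) := spectrum.algebraMap_mem_iff ℂ |>.mpr hx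
    set u : ℂˣ := Units.mk0 (t : ℂ) (by exact_mod_cast htpos.ne') with hu
    have e1 : u • H = t • H := by
      rw [Units.smul_def, hu, Units.val_mk0, hsmul]
    have h1 : (x : ℂ) ∈ u • spectrum ℂ H := by
      rw [← spectrum.unit_smul_eq_smul H u, e1]; exact hxC
    rcases Set.mem_smul_set.mp h1 with ⟨z, hz, hzx⟩
    rcases hspec hz with ⟨r, hr, rfl⟩
    have hzx' : ((t * r : ℝ) : ℂ) = (x : ℂ) := by
      rw [← hzx, Units.smul_def, hu, Units.val_mk0, smul_eq_mul]; push_cast; ring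
    have hxval : x = t * r := (Complex.ofReal_inj.mp hzx').symm
    have hxle : x ≤ -(s * t) := by
      rw [hxval]; nlinarith [Set.mem_Iic.mp hr]
    calc ‖Real.exp x‖ = Real.exp x := Real.norm_of_nonneg (Real.exp_nonneg x)
      _ ≤ Real.exp (-(s * t)) := Real.exp_le_exp.mpr hxle

private lemma exp_decay (s : ℝ) (hs : 0 < s) :
    Tendsto (fun t : ℝ => Real.exp (-(s * t))) atTop (nhds 0) := by
  apply Real.tendsto_exp_atBot.comp
  have h1 : Tendsto (fun t : ℝ => s * t) atTop atTop :=
    Tendsto.const_mul_atTop hs tendsto_id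
  exact tendsto_neg_atBot_iff.mpr h1

private lemma tendsto_expG (H : E →L[ℂ] E) (hsa : IsSelfAdjoint H)
    {s : ℝ} (hs : 0 < s)
    (hspec : spectrum ℂ H ⊆ (fun r : ℝ => (r : ℂ)) '' Set.Iic (-s)) (x : E) :
    Tendsto (fun t : ℝ => (NormedSpace.exp ((t : ℂ) • H)) x) atTop (nhds 0) := by
  have hg : Tendsto (fun t : ℝ => Real.exp (-(s * t)) * ‖x‖) atTop (nhds 0) := by
    simpa using (exp_decay s hs).mul_const ‖x‖
  refine squeeze_zero_norm' ?_ hg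
  · filter_upwards [eventually_ge_atTop (0 : ℝ)] with t ht
    calc ‖(NormedSpace.exp ((t : ℂ) • H)) x‖
        ≤ ‖NormedSpace.exp ((t : ℂ) • H)‖ * ‖x‖ :=
          ContinuousLinearMap.le_opNorm _ _
      _ ≤ Real.exp (-(s * t)) * ‖x‖ :=
          mul_le_mul_of_nonneg_right (exp_norm_le H hsa hs hspec ht) (norm_nonneg x)

end Aux

/-- If the spectrum of the bounded self-adjoint operator `H` lies in `(-∞, -s]`, `s > 0`
(so that `H` is invertible), and `f` is continuous with `f(t) → f*`, then the solution
`ν(t) = exp(tH) ν₀ + ∫_0^t exp((t-σ)H) f(σ) dσ` of `ν' = Hν + f` converges to `-H⁻¹ f*`. -/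
theorem inhomogeneous_solution_tendsto
    (E : Type*) [NormedAddCommGroup E] [InnerProductSpace ℂ E] [CompleteSpace E]
    (H : E →L[ℂ] E) (hsa : IsSelfAdjoint H)
    (s : ℝ) (hs : 0 < s)
    (hspec : spectrum ℂ H ⊆ (fun r : ℝ => (r : ℂ)) '' Set.Iic (-s))
    (ν₀ : E) (f : ℝ → E) (hf : ContinuousOn f (Set.Ici (0 : ℝ)))
    (fstar : E) (hfstar : Tendsto f atTop (nhds fstar)) :
    Tendsto
      (fun t : ℝ => (NormedSpace.exp ((t : ℂ) • H)) ν₀ +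
        ∫ σ in (0 : ℝ)..t, (NormedSpace.exp (((t - σ : ℝ) : ℂ) • H)) (f σ))
      atTop (nhds (-(Ring.inverse H) fstar)) := by
  -- notation
  set G : ℝ → E →L[ℂ] E := fun u => NormedSpace.exp ((u : ℂ) • H) with hGdef
  -- H is a unit
  have hunit : IsUnit H := by
    by_contra hnu
    have h0 : (0 : ℂ) ∈ spectrum ℂ H := (spectrum.zero_mem_iff ℂ).mpr hnu
    rcases hspec h0 with ⟨r, hr, hr0⟩
    have hr0' : (r : ℂ) = 0 := hr0
    have : r = 0 := by exact_mod_cast hr0' 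
    subst this
    exact absurd (Set.mem_Iic.mp hr) (by linarith)
  have hinv : Ring.inverse H * H = 1 := Ring.inverse_mul_cancel H hunit
  -- derivative of t ↦ G t x
  have hGx : ∀ (x : E) (t : ℝ), HasDerivAt (fun u : ℝ => G u x) (H (G t x)) t := by
    intro x t
    have hA := (((ContinuousLinearMap.apply ℂ E) x).restrictScalars ℝ).hasFDerivAt
      (x := NormedSpace.exp ((t : ℂ) • H))
    have h := hA.comp_hasDerivAt t (hasDerivAt_expG H t)
    simpa [Function.comp_def, ContinuousLinearMap.mul_apply, hGdef] using h
  have hGcont : Continuous G := contG H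
  have hGnorm : ∀ {t : ℝ}, 0 ≤ t → ‖G t‖ ≤ Real.exp (-(s * t)) :=
    fun ht => exp_norm_le H hsa hs hspec ht
  have hG0 : G 0 = 1 := by simp [hGdef]
  -- Step B : the `fstar` part of the integral
  have hB : ∀ t : ℝ, (∫ σ in (0:ℝ)..t, G (t - σ) fstar) =
      (Ring.inverse H) (G t fstar) - (Ring.inverse H) fstar := by
    intro t
    have h1 : (∫ σ in (0:ℝ)..t, G (t - σ) fstar) = ∫ u in (0:ℝ)..t, G u fstar := by
      simpa using intervalIntegral.integral_comp_sub_left (a := 0) (b := t)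
        (fun u => G u fstar) t
    have h2 : ∀ u ∈ Set.uIcc (0:ℝ) t,
        HasDerivAt (fun u => (Ring.inverse H) (G u fstar)) (G u fstar) u := by
      intro u _
      have hd := ((Ring.inverse H).restrictScalars ℝ).hasFDerivAt.comp_hasDerivAt u
        (hGx fstar u)
      have : (Ring.inverse H) (H (G u fstar)) = G u fstar := by
        rw [← ContinuousLinearMap.mul_apply, hinv, ContinuousLinearMap.one_apply]
      simpa [Function.comp_def, this] using hd
    have h3 : IntervalIntegrable (fun u => G u fstar) MeasureTheory.volume 0 t :=
      (hGcont.clm_apply continuous_const).intervalIntegrable 0 t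
    rw [h1, intervalIntegral.integral_eq_sub_of_hasDerivAt h2 h3, hG0,
      ContinuousLinearMap.one_apply]
  -- Step C : remainder tends to 0
  have hC : Tendsto (fun t : ℝ => ∫ σ in (0:ℝ)..t, G (t - σ) (f σ - fstar)) atTop (nhds 0) := by
    rw [NormedAddCommGroup.tendsto_nhds_zero]
    intro ε hε
    set r : ℝ → ℝ := fun σ => ‖f σ - fstar‖ with hrdef
    have hrcont : ContinuousOn r (Set.Ici 0) := (hf.sub continuousOn_const).norm
    have hrnn : ∀ σ, 0 ≤ r σ := fun σ => norm_nonneg _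
    have hr0 : Tendsto r atTop (nhds 0) := by
      have h1 : Tendsto (fun σ => f σ - fstar) atTop (nhds (fstar - fstar)) :=
        hfstar.sub tendsto_const_nhds
      rw [sub_self] at h1
      simpa [hrdef] using h1.norm
    have hev : ∀ᶠ σ in atTop, r σ < s * ε / 4 :=
      hr0.eventually (gt_mem_nhds (by positivity))
    obtain ⟨T₀, hT₀⟩ := eventually_atTop.mp hev
    set T : ℝ := max T₀ 0 with hTdef
    have hT0 : (0:ℝ) ≤ T := le_max_right _ _
    have hrT : ∀ σ, T ≤ σ → r σ ≤ s * ε / 4 :=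
      fun σ hσ => (hT₀ σ (le_trans (le_max_left _ _) hσ)).le
    set C : ℝ := ∫ σ in (0:ℝ)..T, r σ with hCdef
    have hCtend : Tendsto (fun t : ℝ => Real.exp (-(s * (t - T))) * C) atTop (nhds 0) := by
      have h1 : Tendsto (fun t : ℝ => t - T) atTop atTop := by
        simpa [sub_eq_add_neg] using
          tendsto_atTop_add_const_right atTop (-T) (tendsto_id (α := ℝ))
      have := ((exp_decay s hs).comp h1).mul_const C
      simpa using this
    have h1 := hCtend.eventually (gt_mem_nhds (half_pos hε))
    filter_upwards [h1, eventually_ge_atTop T] with t hlt htT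
    have ht0 : (0:ℝ) ≤ t := le_trans hT0 htT
    set g : ℝ → ℝ := fun σ => Real.exp (s * σ - s * t) with hgdef
    have hgcont : Continuous g :=
      Real.continuous_exp.comp ((continuous_const.mul continuous_id).sub continuous_const)
    have hIcc : Set.uIcc (0:ℝ) t = Set.Icc 0 t := Set.uIcc_of_le ht0
    have hIccT : Set.uIcc (0:ℝ) T = Set.Icc 0 T := Set.uIcc_of_le hT0
    have hIccTt : Set.uIcc T t = Set.Icc T t := Set.uIcc_of_le htT
    have hnormcont : ContinuousOn (fun σ => ‖G (t - σ) (f σ - fstar)‖) (Set.Icc 0 t) :=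
      ((hGcont.comp (continuous_const.sub continuous_id)).continuousOn.clm_apply
        ((hf.mono Set.Icc_subset_Ici_self).sub continuousOn_const)).norm
    have hint_norm : IntervalIntegrable (fun σ => ‖G (t - σ) (f σ - fstar)‖)
        MeasureTheory.volume 0 t := by
      apply ContinuousOn.intervalIntegrable
      rw [hIcc]; exact hnormcont
    have hgr : ContinuousOn (fun σ => g σ * r σ) (Set.Ici 0) :=
      hgcont.continuousOn.mul hrcont
    have hint_gr : IntervalIntegrable (fun σ => g σ * r σ) MeasureTheory.volume 0 t := by
      apply ContinuousOn.intervalIntegrable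
      rw [hIcc]; exact hgr.mono Set.Icc_subset_Ici_self
    have hint_gr1 : IntervalIntegrable (fun σ => g σ * r σ) MeasureTheory.volume 0 T := by
      apply ContinuousOn.intervalIntegrable
      rw [hIccT]; exact hgr.mono Set.Icc_subset_Ici_self
    have hint_gr2 : IntervalIntegrable (fun σ => g σ * r σ) MeasureTheory.volume T t := by
      apply ContinuousOn.intervalIntegrable
      rw [hIccTt]; exact hgr.mono (fun x hx => le_trans hT0 hx.1)
    have hint_r : IntervalIntegrable r MeasureTheory.volume 0 T := by
      apply ContinuousOn.intervalIntegrable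
      rw [hIccT]; exact hrcont.mono Set.Icc_subset_Ici_self
    have hint_g2 : IntervalIntegrable g MeasureTheory.volume T t :=
      hgcont.intervalIntegrable T t
    have hbound : ∀ σ ∈ Set.Icc (0:ℝ) t, ‖G (t - σ) (f σ - fstar)‖ ≤ g σ * r σ := by
      intro σ hσ
      have hb1 : ‖G (t - σ) (f σ - fstar)‖ ≤ ‖G (t - σ)‖ * r σ :=
        ContinuousLinearMap.le_opNorm _ _
      have hb2 : ‖G (t - σ)‖ ≤ g σ := by
        have hh := hGnorm (sub_nonneg.mpr hσ.2)
        have he : -(s * (t - σ)) = s * σ - s * t := by ring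
        rwa [he] at hh
      exact hb1.trans (mul_le_mul_of_nonneg_right hb2 (hrnn σ))
    have hgint : (∫ σ in T..t, g σ)
        = Real.exp (s * t - s * t) / s - Real.exp (s * T - s * t) / s := by
      apply intervalIntegral.integral_eq_sub_of_hasDerivAt
        (f := fun σ : ℝ => Real.exp (s * σ - s * t) / s)
      · intro σ _
        have hd1 : HasDerivAt (fun σ : ℝ => s * σ - s * t) s σ := by
          simpa using ((hasDerivAt_id σ).const_mul s).sub_const (s * t)
        have hd2 := (Real.hasDerivAt_exp (s * σ - s * t)).comp σ hd1
        have hd3 := hd2.div_const s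
        have he : Real.exp (s * σ - s * t) * s / s = g σ := by
          rw [hgdef]; field_simp
        rw [he] at hd3
        exact hd3
      · exact hgcont.intervalIntegrable T t
    have hgle : (∫ σ in T..t, g σ) ≤ 1 / s := by
      rw [hgint, sub_self, Real.exp_zero]
      have h2 : 0 ≤ Real.exp (s * T - s * t) / s := by positivity
      linarith
    have piece1 : (∫ σ in (0:ℝ)..T, g σ * r σ) ≤ Real.exp (-(s * (t - T))) * C := by
      have hptw : ∀ σ ∈ Set.Icc (0:ℝ) T, g σ * r σ ≤ Real.exp (-(s * (t - T))) * r σ := by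
        intro σ hσ
        refine mul_le_mul_of_nonneg_right ?_ (hrnn σ)
        rw [hgdef]
        apply Real.exp_le_exp.mpr
        nlinarith [hσ.2]
      calc (∫ σ in (0:ℝ)..T, g σ * r σ)
          ≤ ∫ σ in (0:ℝ)..T, Real.exp (-(s * (t - T))) * r σ :=
            intervalIntegral.integral_mono_on hT0 hint_gr1 (hint_r.const_mul _) hptw
        _ = Real.exp (-(s * (t - T))) * C := by
            rw [intervalIntegral.integral_const_mul]
    have piece2 : (∫ σ in T..t, g σ * r σ) ≤ ε / 4 := by
      have hptw : ∀ σ ∈ Set.Icc T t, g σ * r σ ≤ g σ * (s * ε / 4) := by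
        intro σ hσ
        exact mul_le_mul_of_nonneg_left (hrT σ hσ.1) (Real.exp_nonneg _)
      calc (∫ σ in T..t, g σ * r σ)
          ≤ ∫ σ in T..t, g σ * (s * ε / 4) :=
            intervalIntegral.integral_mono_on htT hint_gr2 (hint_g2.mul_const _) hptw
        _ = (∫ σ in T..t, g σ) * (s * ε / 4) := by
            rw [intervalIntegral.integral_mul_const]
        _ ≤ (1 / s) * (s * ε / 4) := by
            refine mul_le_mul_of_nonneg_right hgle (by positivity)
        _ = ε / 4 := by field_simp
    have key : ‖∫ σ in (0:ℝ)..t, G (t - σ) (f σ - fstar)‖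
        ≤ Real.exp (-(s * (t - T))) * C + ε / 4 := by
      calc ‖∫ σ in (0:ℝ)..t, G (t - σ) (f σ - fstar)‖
          ≤ ∫ σ in (0:ℝ)..t, ‖G (t - σ) (f σ - fstar)‖ :=
            intervalIntegral.norm_integral_le_integral_norm ht0
        _ ≤ ∫ σ in (0:ℝ)..t, g σ * r σ :=
            intervalIntegral.integral_mono_on ht0 hint_norm hint_gr hbound
        _ = (∫ σ in (0:ℝ)..T, g σ * r σ) + ∫ σ in T..t, g σ * r σ :=
            (intervalIntegral.integral_add_adjacent_intervals hint_gr1 hint_gr2).symm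
        _ ≤ Real.exp (-(s * (t - T))) * C + ε / 4 := add_le_add piece1 piece2
    calc ‖∫ σ in (0:ℝ)..t, G (t - σ) (f σ - fstar)‖
        ≤ Real.exp (-(s * (t - T))) * C + ε / 4 := key
      _ < ε / 2 + ε / 4 := by linarith
      _ < ε := by linarith
  -- eventual decomposition
  have hsplit : ∀ᶠ t in atTop,
      (G t) ν₀ + ∫ σ in (0:ℝ)..t, G (t - σ) (f σ)
        = (G t) ν₀ + ((∫ σ in (0:ℝ)..t, G (t - σ) (f σ - fstar)) +
            ((Ring.inverse H) (G t fstar) - (Ring.inverse H) fstar)) := by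
    filter_upwards [eventually_ge_atTop (0 : ℝ)] with t ht
    have hicc : Set.uIcc (0:ℝ) t = Set.Icc 0 t := Set.uIcc_of_le ht
    have hGσ : ContinuousOn (fun σ : ℝ => G (t - σ)) (Set.Icc 0 t) :=
      (hGcont.comp (continuous_const.sub continuous_id)).continuousOn
    have hint1 : IntervalIntegrable (fun σ => G (t - σ) (f σ - fstar))
        MeasureTheory.volume 0 t := by
      apply ContinuousOn.intervalIntegrable
      rw [hicc]
      exact hGσ.clm_apply ((hf.mono (Set.Icc_subset_Ici_self)).sub continuousOn_const)
    have hint2 : IntervalIntegrable (fun σ => G (t - σ) fstar)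
        MeasureTheory.volume 0 t := by
      apply ContinuousOn.intervalIntegrable
      rw [hicc]
      exact hGσ.clm_apply continuousOn_const
    have : (∫ σ in (0:ℝ)..t, G (t - σ) (f σ))
        = (∫ σ in (0:ℝ)..t, G (t - σ) (f σ - fstar)) + ∫ σ in (0:ℝ)..t, G (t - σ) fstar := by
      rw [← intervalIntegral.integral_add hint1 hint2]
      congr 1
      ext σ
      rw [← map_add]
      congr 1
      abel
    rw [this, hB t]
  -- assemble
  have hGν : Tendsto (fun t : ℝ => (G t) ν₀) atTop (nhds 0) :=
    tendsto_expG H hsa hs hspec ν₀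
  have hGf : Tendsto (fun t : ℝ => (Ring.inverse H) (G t fstar)) atTop (nhds 0) := by
    have := ((Ring.inverse H).continuous.tendsto 0).comp (tendsto_expG H hsa hs hspec fstar)
    simpa [Function.comp_def, hGdef] using this
  have hfinal : Tendsto
      (fun t : ℝ => (G t) ν₀ + ((∫ σ in (0:ℝ)..t, G (t - σ) (f σ - fstar)) +
        ((Ring.inverse H) (G t fstar) - (Ring.inverse H) fstar)))
      atTop (nhds (-(Ring.inverse H) fstar)) := by
    have := hGν.add (hC.add (hGf.sub_const ((Ring.inverse H) fstar)))
    simpa using this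
  exact hfinal.congr' (by filter_upwards [hsplit] with t h using h.symm)
end

section
/- For every integer n ≥ 2, f(n, 2) < 6·(n−1)^{n−1}. -/
/-- `f(n, r) = ∑ i₁^{i₁} ⋯ i_r^{i_r}`, the sum running over ordered `r`-tuples of
positive integers with `i₁ + ⋯ + i_r = n`. -/
def fnr (n r : ℕ) : ℕ :=
  ∑ i ∈ (Finset.Nat.antidiagonalTuple r n).filter (fun i => ∀ j, 0 < i j),
    ∏ j, (i j) ^ (i j)

lemma fnr_two (n : ℕ) : fnr n 2 = ∑ i ∈ Finset.Ico 1 n, i ^ i * (n - i) ^ (n - i) := by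
  unfold fnr
  rw [Finset.Nat.antidiagonalTuple_two, Finset.Nat.antidiagonal_eq_map, Finset.map_map,
    Finset.filter_map, Finset.sum_map]
  simp only [Function.Embedding.trans_apply, Function.Embedding.coeFn_mk,
    Equiv.coe_toEmbedding, piFinTwoEquiv_symm_apply, Fin.prod_univ_two, Fin.forall_fin_two,
    Function.comp_def, Fin.cons_zero, Fin.cons_one]
  apply Finset.sum_congr
  · ext x
    simp only [Finset.mem_filter, Finset.mem_range, Finset.mem_Ico]
    dsimp only [DFunLike.coe]
    omega
  · intro x _; rfl

lemma bern' (y k : ℕ) : (y+1)^(k+1) ≤ y^(k+1) + (k+1)*(y+1)^k := by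
  induction k with
  | zero => simp
  | succ k ih =>
    calc (y+1)^(k+2) = (y+1)^(k+1)*(y+1) := by ring
    _ ≤ (y^(k+1) + (k+1)*(y+1)^k)*(y+1) := Nat.mul_le_mul_right _ ih
    _ = y^(k+2) + y^(k+1) + (k+1)*(y+1)^(k+1) := by ring
    _ ≤ y^(k+2) + (y+1)^(k+1) + (k+1)*(y+1)^(k+1) := by
        have : y^(k+1) ≤ (y+1)^(k+1) := Nat.pow_le_pow_left (Nat.le_succ y) _
        omega
    _ = y^(k+2) + (k+2)*(y+1)^(k+1) := by ring

lemma binom' (a k : ℕ) : a^(k+1) + (k+1)*a^k ≤ (a+1)^(k+1) := by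
  induction k with
  | zero => simp
  | succ k ih =>
    calc a^(k+2) + (k+2)*a^(k+1) ≤ a^(k+2) + a^(k+1) + (k+1)*a^(k+1) + (k+1)*a^k := by
          nlinarith [Nat.zero_le (a^k)]
    _ = (a^(k+1) + (k+1)*a^k)*(a+1) := by ring
    _ ≤ (a+1)^(k+1)*(a+1) := Nat.mul_le_mul_right _ ih
    _ = (a+1)^(k+2) := by ring

lemma two_mul_pow (k : ℕ) : 2*(k+1)^(k+1) ≤ (k+2)^(k+1) := by
  have h := binom' (k+1) k
  calc 2*(k+1)^(k+1) = (k+1)^(k+1) + (k+1)*(k+1)^k := by ring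
  _ ≤ (k+2)^(k+1) := h

lemma lemG (m : ℕ) : (m+2)^(m+2) * (m+2)^(m+2) ≤ (m+1)^(m+1) * (m+3)^(m+3) := by
  have key := bern' (m^2+4*m+3) m
  have key2 : (m+2)^(2*m+2) ≤ ((m+1)*(m+3))^(m+1) + (m+1)*(m+2)^(2*m) := by
    have e1 : (m^2+4*m+3+1)^(m+1) = (m+2)^(2*m+2) := by
      rw [show m^2+4*m+3+1 = (m+2)^2 by ring, ← pow_mul]
      ring_nf
    have e2 : (m^2+4*m+3)^(m+1) = ((m+1)*(m+3))^(m+1) := by ring_nf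
    have e3 : (m+1)*(m^2+4*m+3+1)^m = (m+1)*(m+2)^(2*m) := by
      rw [show m^2+4*m+3+1 = (m+2)^2 by ring, ← pow_mul, Nat.mul_comm 2 m]
    rw [e1, e2, e3] at key
    exact key
  have base : (m+2)^4 + (m+1)*(m+3)^2 ≤ (m+2)^2*(m+3)^2 := by nlinarith
  have poly : (m+2)^(2*m+4) + (m+1)*((m+2)^(2*m)*(m+3)^2) ≤ (m+2)^(2*m+2)*(m+3)^2 := by
    calc (m+2)^(2*m+4) + (m+1)*((m+2)^(2*m)*(m+3)^2)
        = (m+2)^(2*m) * ((m+2)^4 + (m+1)*(m+3)^2) := by ring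
      _ ≤ (m+2)^(2*m) * ((m+2)^2*(m+3)^2) := Nat.mul_le_mul_left _ base
      _ = (m+2)^(2*m+2)*(m+3)^2 := by ring
  have comb : (m+2)^(2*m+4) + (m+1)*((m+2)^(2*m)*(m+3)^2)
      ≤ ((m+1)*(m+3))^(m+1)*(m+3)^2 + (m+1)*((m+2)^(2*m)*(m+3)^2) := by
    calc (m+2)^(2*m+4) + (m+1)*((m+2)^(2*m)*(m+3)^2)
        ≤ (m+2)^(2*m+2)*(m+3)^2 := poly
      _ ≤ (((m+1)*(m+3))^(m+1) + (m+1)*(m+2)^(2*m))*(m+3)^2 := Nat.mul_le_mul_right _ key2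
      _ = ((m+1)*(m+3))^(m+1)*(m+3)^2 + (m+1)*((m+2)^(2*m)*(m+3)^2) := by ring
  have final : (m+2)^(2*m+4) ≤ ((m+1)*(m+3))^(m+1)*(m+3)^2 :=
    Nat.le_of_add_le_add_right comb
  calc (m+2)^(m+2) * (m+2)^(m+2) = (m+2)^(2*m+4) := by ring
  _ ≤ ((m+1)*(m+3))^(m+1)*(m+3)^2 := final
  _ = (m+1)^(m+1) * (m+3)^(m+3) := by rw [mul_pow]; ring

lemma step' (a : ℕ) (ha : 1 ≤ a) : ∀ b, a+1 ≤ b → (a+1)^(a+1)*b^b ≤ a^a*(b+1)^(b+1) := by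
  intro b hb
  induction b, hb using Nat.le_induction with
  | base =>
    obtain ⟨m, rfl⟩ : ∃ m, a = m+1 := ⟨a-1, by omega⟩
    exact lemG m
  | succ b hb ih =>
    obtain ⟨m, hm⟩ : ∃ m, b = m+2 := ⟨b-2, by omega⟩
    have g : (b+1)^(b+1)*(b+1)^(b+1) ≤ b^b*(b+2)^(b+2) := by
      subst hm; exact lemG (m+1)
    have h1 : b^b * ((a+1)^(a+1)*(b+1)^(b+1)) ≤ b^b * (a^a*(b+2)^(b+2)) := by
      calc b^b * ((a+1)^(a+1)*(b+1)^(b+1)) = ((a+1)^(a+1)*b^b) * (b+1)^(b+1) := by ring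
        _ ≤ (a^a*(b+1)^(b+1)) * (b+1)^(b+1) := Nat.mul_le_mul_right _ ih
        _ = a^a * ((b+1)^(b+1)*(b+1)^(b+1)) := by ring
        _ ≤ a^a * (b^b*(b+2)^(b+2)) := Nat.mul_le_mul_left _ g
        _ = b^b * (a^a*(b+2)^(b+2)) := by ring
    exact Nat.le_of_mul_le_mul_left h1 (Nat.pow_pos (by omega))

lemma mid : ∀ i, 2 ≤ i → ∀ j, i ≤ j → i^i * j^j ≤ 4 * (i + j - 2)^(i + j - 2) := by
  intro i hi
  induction i, hi using Nat.le_induction with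
  | base =>
    intro j hj
    have : 2 + j - 2 = j := by omega
    rw [this]
    norm_num
  | succ i hi ih =>
    intro j hj
    have hstep : (i+1)^(i+1) * j^j ≤ i^i * (j+1)^(j+1) := step' i (by omega) j hj
    have h2 := ih (j+1) (by omega)
    have e : i + (j+1) - 2 = i + 1 + j - 2 := by omega
    rw [e] at h2
    exact le_trans hstep h2

/-- For every `n ≥ 2`, `f(n, 2) < 6 (n-1)^{n-1}`. -/
theorem fnr_two_lt (n : ℕ) (hn : 2 ≤ n) : fnr n 2 < 6 * (n - 1) ^ (n - 1) := by
  rcases eq_or_lt_of_le hn with rfl | hn3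
  · rw [fnr_two]; decide
  obtain ⟨m, rfl⟩ : ∃ m, n = m + 3 := ⟨n - 3, by omega⟩
  rw [fnr_two, show m + 3 - 1 = m + 2 by omega]
  have hsplit1 : ∑ i ∈ Finset.Ico 1 (m+3), i ^ i * (m+3 - i) ^ (m+3 - i)
      = 1 ^ 1 * (m+3-1) ^ (m+3-1) + ∑ i ∈ Finset.Ico 2 (m+3), i ^ i * (m+3 - i) ^ (m+3 - i) :=
    Finset.sum_eq_sum_Ico_succ_bot (by omega) _
  have hsplit2 : ∑ i ∈ Finset.Ico 2 (m+3), i ^ i * (m+3 - i) ^ (m+3 - i)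
      = ∑ i ∈ Finset.Ico 2 (m+2), i ^ i * (m+3 - i) ^ (m+3 - i)
        + (m+2) ^ (m+2) * (m+3-(m+2)) ^ (m+3-(m+2)) :=
    Finset.sum_Ico_succ_top (by omega) _
  have hmid : ∀ i ∈ Finset.Ico 2 (m+2), i ^ i * (m+3 - i) ^ (m+3 - i) ≤ 2 * (m+2)^(m+1) := by
    intro i hi
    simp only [Finset.mem_Ico] at hi
    set j := m + 3 - i with hj
    have hij : i + j = m + 3 := by omega
    have hb : i ^ i * j ^ j ≤ 4 * (m+1)^(m+1) := by
      rcases le_total i j with h | h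
      · have := mid i (by omega) j h
        rwa [show i + j - 2 = m + 1 by omega] at this
      · have := mid j (by omega) i h
        rwa [show j + i - 2 = m + 1 by omega, Nat.mul_comm] at this
    have h2 : 4 * (m+1)^(m+1) ≤ 2 * (m+2)^(m+1) := by
      have := two_mul_pow m
      omega
    exact le_trans hb h2
  have hcard : (Finset.Ico 2 (m+2)).card = m := by simp
  have hsum : ∑ i ∈ Finset.Ico 2 (m+2), i ^ i * (m+3 - i) ^ (m+3 - i) ≤ m * (2 * (m+2)^(m+1)) := by
    have := Finset.sum_le_card_nsmul _ _ _ hmid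
    rwa [hcard, smul_eq_mul] at this
  have hsum2 : m * (2 * (m+2)^(m+1)) ≤ 2 * (m+2)^(m+2) := by
    calc m * (2 * (m+2)^(m+1)) ≤ (m+2) * (2 * (m+2)^(m+1)) := by
          exact Nat.mul_le_mul_right _ (by omega)
      _ = 2 * (m+2)^(m+2) := by ring
  have hpos : 0 < (m+2)^(m+2) := Nat.pow_pos (by omega)
  rw [hsplit1, hsplit2]
  simp only [show m+3-1 = m+2 by omega, show m+3-(m+2) = 1 by omega, one_pow, one_mul, mul_one]
  omega
end

section
/- For every integer n ≥ 3, f(n, 3) < 6·(n−1)^{n−1}. -/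
/-! ### Arithmetic lemmas -/

/-- ℕ Bernoulli: `N^s * (N - s) ≤ (N-1)^s * N`. -/
lemma bern_nat (s N : ℕ) (h : s ≤ N) : N ^ s * (N - s) ≤ (N - 1) ^ s * N := by
  induction s with
  | zero => simp
  | succ s ih =>
    have hs : s ≤ N := le_of_lt (lt_of_lt_of_le (Nat.lt_succ_self s) h)
    have ih' := ih hs
    have key : N * (N - (s+1)) ≤ (N - 1) * (N - s) := by
      rcases N with _ | M
      · simp
      · rcases Nat.exists_eq_add_of_le h with ⟨d, hd⟩
        have h1 : M + 1 - (s+1) = d := by omega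
        have h2 : M + 1 - s = d + 1 := by omega
        have h3 : M + 1 - 1 = M := by omega
        rw [h1, h2, h3]
        have hdM : d ≤ M := by omega
        nlinarith [hdM]
    calc N ^ (s+1) * (N - (s+1)) = N ^ s * (N * (N - (s+1))) := by ring
      _ ≤ N ^ s * ((N - 1) * (N - s)) := Nat.mul_le_mul_left _ key
      _ = (N ^ s * (N - s)) * (N - 1) := by ring
      _ ≤ ((N - 1) ^ s * N) * (N - 1) := Nat.mul_le_mul_right _ ih'
      _ = (N - 1) ^ (s+1) * N := by ring

/-- step: `(s+1)^(2s+2) ≤ s^s (s+2)^(s+2)`. -/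
lemma step_nat (s : ℕ) : (s+1) ^ (2*s+2) ≤ s ^ s * (s+2) ^ (s+2) := by
  have hN : s ≤ (s+1)^2 := by nlinarith
  have hb := bern_nat s ((s+1)^2) hN
  have ee : (s+1)^2 = s^2 + 2*s + 1 := by ring
  have ee2 : s * (s+2) = s^2 + 2*s := by ring
  have e1 : (s+1)^2 - s = s^2 + s + 1 := by omega
  have e2 : (s+1)^2 - 1 = s * (s+2) := by omega
  rw [e1, e2] at hb
  have hb' : (s+1)^(2*s) * (s^2+s+1) ≤ s^s * (s+2)^s * (s+1)^2 := by
    calc (s+1)^(2*s) * (s^2+s+1) = ((s+1)^2)^s * (s^2+s+1) := by rw [pow_mul]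
      _ ≤ (s*(s+2))^s * (s+1)^2 := hb
      _ = s^s * (s+2)^s * (s+1)^2 := by rw [mul_pow]
  have hB : (s+1)^4 ≤ (s^2+s+1) * (s+2)^2 := by nlinarith
  have hpos : 0 < (s^2+s+1) * (s+2)^2 := by positivity
  refine Nat.le_of_mul_le_mul_right ?_ hpos
  calc (s+1)^(2*s+2) * ((s^2+s+1) * (s+2)^2)
      = ((s+1)^(2*s) * (s^2+s+1)) * ((s+1)^2 * (s+2)^2) := by ring
    _ ≤ (s^s * (s+2)^s * (s+1)^2) * ((s+1)^2 * (s+2)^2) :=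
        Nat.mul_le_mul_right _ hb'
    _ = (s^s * (s+2)^(s+2)) * (s+1)^4 := by ring
    _ ≤ (s^s * (s+2)^(s+2)) * ((s^2+s+1) * (s+2)^2) :=
        Nat.mul_le_mul_left _ hB

/-- monotonicity: for `s ≤ t`, `(s+1)^(s+1) t^t ≤ s^s (t+1)^(t+1)`. -/
lemma mono_nat (s t : ℕ) (h : s ≤ t) : (s+1)^(s+1) * t^t ≤ s^s * (t+1)^(t+1) := by
  induction t with
  | zero =>
    interval_cases s
    · simp
  | succ t ih =>
    rcases Nat.lt_or_ge s (t+1) with hlt | hge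
    · have hst : s ≤ t := Nat.lt_succ_iff.mp hlt
      have ih' := ih hst
      rcases Nat.eq_zero_or_pos t with rfl | ht
      · interval_cases s
        · norm_num
      · have hstep := step_nat t
        have h1 : (s+1)^(s+1) * (t+1)^(t+1) * t^t ≤ s^s * ((t+1)^(t+1) * (t+1)^(t+1)) := by
          calc (s+1)^(s+1) * (t+1)^(t+1) * t^t = ((s+1)^(s+1) * t^t) * (t+1)^(t+1) := by ring
            _ ≤ (s^s * (t+1)^(t+1)) * (t+1)^(t+1) := Nat.mul_le_mul_right _ ih'
            _ = s^s * ((t+1)^(t+1) * (t+1)^(t+1)) := by ring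
        have h2 : (t+1)^(t+1) * (t+1)^(t+1) = (t+1)^(2*t+2) := by
          rw [← pow_add]; ring_nf
        have h3 : (s+1)^(s+1) * (t+1)^(t+1) * t^t ≤ s^s * (t^t * (t+2)^(t+2)) := by
          rw [h2] at h1
          exact le_trans h1 (Nat.mul_le_mul_left _ hstep)
        have htpos : 0 < t^t := pow_pos ht _
        refine Nat.le_of_mul_le_mul_right ?_ htpos
        calc (s+1)^(s+1) * (t+1)^(t+1) * t^t ≤ s^s * (t^t * (t+2)^(t+2)) := h3
          _ = s^s * (t+1+1)^(t+1+1) * t^t := by ring_nf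
    · have : s = t + 1 := le_antisymm h hge
      subst this
      exact le_of_eq (by ring)

/-- move mass from the small side to the big side. -/
lemma pull_nat (j : ℕ) : ∀ d a b : ℕ, a - j = d → j ≤ a → a ≤ b →
    a^a * b^b ≤ j^j * (a + b - j)^(a + b - j) := by
  intro d
  induction d with
  | zero =>
    intro a b hd hja hab
    have : a = j := by omega
    subst this
    have : a + b - a = b := by omega
    rw [this]
  | succ d ih =>
    intro a b hd hja hab
    have ha1 : 1 ≤ a := by omega
    have hM := mono_nat (a-1) b (by omega)
    have e1 : a - 1 + 1 = a := by omega
    rw [e1] at hM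
    have hrec := ih (a-1) (b+1) (by omega) (by omega) (by omega)
    have e2 : a - 1 + (b+1) - j = a + b - j := by omega
    rw [e2] at hrec
    exact le_trans hM hrec

/-- `(x+1)^n ≥ x^n + n x^(n-1)`. -/
lemma pow_succ_ge (n x : ℕ) : x^n + n * x^(n-1) ≤ (x+1)^n := by
  induction n with
  | zero => simp
  | succ n ih =>
    rcases Nat.eq_zero_or_pos n with rfl | hn
    · simp
    · calc x^(n+1) + (n+1) * x^(n+1-1)
          = x^n * x + n * x^n + x^n := by rw [Nat.add_sub_cancel]; ring
        _ ≤ x^n * x + n * (x^(n-1) * x) + x^n := by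
            have : x^(n-1) * x = x^n := by
              rcases Nat.exists_eq_add_of_le hn with ⟨c, hc⟩
              have e : n - 1 = c := by omega
              rw [e, ← pow_succ]
              congr 1
              omega
            rw [this]
        _ ≤ (x^n + n * x^(n-1)) * (x+1) := by ring_nf; linarith [Nat.zero_le (x^(n-1)*n)]
        _ ≤ (x+1)^n * (x+1) := Nat.mul_le_mul_right _ ih
        _ = (x+1)^(n+1) := by rw [pow_succ]

lemma two_mul_pow_le (t : ℕ) (ht : 1 ≤ t) : 2 * t^t ≤ (t+1)^t := by
  have h := pow_succ_ge t t
  have : t * t^(t-1) = t^t := by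
    rcases Nat.exists_eq_add_of_le ht with ⟨c, hc⟩
    have e : t - 1 = c := by omega
    rw [e, ← pow_succ']
    congr 1
    omega
  omega

/-! ### The two-variable sum -/

def S2 (m : ℕ) : ℕ := ∑ k ∈ Finset.Ico 1 m, k^k * (m-k)^(m-k)

lemma bnd (j k m : ℕ) (h1 : j ≤ k) (h2 : k + j ≤ m) :
    k^k * (m-k)^(m-k) ≤ j^j * (m-j)^(m-j) := by
  rcases le_total k (m-k) with h | h
  · have := pull_nat j (k-j) k (m-k) rfl h1 h
    have e : k + (m-k) - j = m - j := by omega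
    rwa [e] at this
  · have := pull_nat j ((m-k)-j) (m-k) k rfl (by omega) h
    have e : (m-k) + k - j = m - j := by omega
    rw [e] at this
    calc k^k * (m-k)^(m-k) = (m-k)^(m-k) * k^k := by ring
      _ ≤ j^j * (m-j)^(m-j) := this

lemma pow_succ_ge2 (t : ℕ) (ht : 1 ≤ t) : 2*(t+1) * t^t ≤ (t+1)^(t+1) := by
  calc 2*(t+1)*t^t = (2*t^t)*(t+1) := by ring
    _ ≤ (t+1)^t * (t+1) := Nat.mul_le_mul_right _ (two_mul_pow_le t ht)
    _ = (t+1)^(t+1) := (pow_succ _ _).symm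

lemma sum_Ico_split (f : ℕ → ℕ) (p : ℕ) :
    ∑ k ∈ Finset.Ico 1 (p+9), f k
      = f 1 + f 2 + f (p+7) + f (p+8) + ∑ k ∈ Finset.Ico 3 (p+7), f k := by
  have e : p + 9 = p + 8 + 1 := by omega
  rw [e, Finset.sum_Ico_succ_top (by omega)]
  have e2 : p + 8 = p + 7 + 1 := by omega
  rw [e2, Finset.sum_Ico_succ_top (by omega)]
  rw [Finset.sum_eq_sum_Ico_succ_bot (by omega)]
  rw [Finset.sum_eq_sum_Ico_succ_bot (by omega)]
  ring

lemma S2_le (m : ℕ) : S2 m ≤ 3 * (m-1)^(m-1) := by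
  rcases Nat.lt_or_ge m 9 with hm | hm
  · interval_cases m <;> decide
  · obtain ⟨p, rfl⟩ : ∃ p, m = p + 9 := ⟨m - 9, by omega⟩
    have hfin : (p+9) - 1 = p + 8 := by omega
    rw [hfin, S2, sum_Ico_split (fun k => k^k * (p+9-k)^(p+9-k)) p]
    have d1 : p+9-1 = p+8 := by omega
    have d2 : p+9-2 = p+7 := by omega
    have d3 : p+9-(p+7) = 2 := by omega
    have d4 : p+9-(p+8) = 1 := by omega
    rw [d1, d2, d3, d4]
    have hmid : ∑ k ∈ Finset.Ico 3 (p+7), k^k * (p+9-k)^(p+9-k)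
        ≤ (p+4) * (27 * (p+6)^(p+6)) := by
      have hcard : (Finset.Ico 3 (p+7)).card = p+4 := by
        rw [Nat.card_Ico]; omega
      have := Finset.sum_le_card_nsmul (Finset.Ico 3 (p+7))
        (fun k => k^k * (p+9-k)^(p+9-k)) (27 * (p+6)^(p+6)) ?_
      · rw [hcard, smul_eq_mul] at this; exact this
      · intro k hk
        simp only [Finset.mem_Ico] at hk
        have hb := bnd 3 k (p+9) hk.1 (by omega)
        have e : p + 9 - 3 = p + 6 := by omega
        rw [e] at hb
        calc k^k * (p+9-k)^(p+9-k) ≤ 3^3 * (p+6)^(p+6) := hb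
          _ = 27 * (p+6)^(p+6) := by norm_num
    have hA : 2*(p+8) * (p+7)^(p+7) ≤ (p+8)^(p+8) := by
      have h := pow_succ_ge2 (p+7) (by omega)
      have e : p+7+1 = p+8 := by omega
      rwa [e] at h
    have hB : 2*(p+7) * (p+6)^(p+6) ≤ (p+7)^(p+7) := by
      have h := pow_succ_ge2 (p+6) (by omega)
      have e : p+6+1 = p+7 := by omega
      rwa [e] at h
    have c1 : 27*(p+4) ≤ (2*p+8)*(2*(p+7)) := by nlinarith
    have h1 : (p+4) * (27 * (p+6)^(p+6)) ≤ (2*p+8) * (p+7)^(p+7) := by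
      calc (p+4) * (27 * (p+6)^(p+6)) = (27*(p+4)) * (p+6)^(p+6) := by ring
        _ ≤ ((2*p+8)*(2*(p+7))) * (p+6)^(p+6) := Nat.mul_le_mul_right _ c1
        _ = (2*p+8) * (2*(p+7) * (p+6)^(p+6)) := by ring
        _ ≤ (2*p+8) * (p+7)^(p+7) := Nat.mul_le_mul_left _ hB
    have h2 : 8 * (p+7)^(p+7) + (2*p+8) * (p+7)^(p+7) = 2*(p+8) * (p+7)^(p+7) := by ring
    norm_num
    omega

/-! ### Relating `fnr` to `S2` -/

lemma fnr_succ (n r : ℕ) :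
    fnr n (r+1) = ∑ k ∈ Finset.Ico 1 (n+1), k ^ k * fnr (n-k) r := by
  unfold fnr
  simp only [Finset.mul_sum]
  rw [Finset.sum_sigma']
  refine Finset.sum_nbij' (fun i => ⟨i 0, Fin.tail i⟩) (fun p => Fin.cons p.1 p.2) ?_ ?_ ?_ ?_ ?_
  · intro a ha
    simp only [Finset.mem_filter, Finset.Nat.mem_antidiagonalTuple] at ha
    obtain ⟨hsum, hpos⟩ := ha
    simp only [Finset.mem_sigma, Finset.mem_Ico, Finset.mem_filter,
      Finset.Nat.mem_antidiagonalTuple]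
    refine ⟨⟨hpos 0, ?_⟩, ?_, fun j => hpos j.succ⟩
    · have : a 0 ≤ ∑ i, a i := Finset.single_le_sum (fun i _ => Nat.zero_le _) (Finset.mem_univ 0)
      omega
    · have h1 : ∑ i, a i = a 0 + ∑ i : Fin r, Fin.tail a i := by
        rw [← Fin.sum_cons (a 0) (Fin.tail a), Fin.cons_self_tail]
      simp only [Fin.tail] at h1 ⊢
      omega
  · rintro ⟨k, t⟩ hp
    simp only [Finset.mem_sigma, Finset.mem_Ico, Finset.mem_filter,
      Finset.Nat.mem_antidiagonalTuple] at hp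
    obtain ⟨⟨hk1, hkn⟩, hsum, hpos⟩ := hp
    simp only [Finset.mem_filter, Finset.Nat.mem_antidiagonalTuple, Fin.sum_cons, hsum]
    constructor
    · omega
    · intro j
      refine Fin.cases ?_ ?_ j
      · simpa using (show 0 < k by omega)
      · intro i; simpa using hpos i
  · intro a _; simp [Fin.cons_self_tail]
  · rintro ⟨k, t⟩ _; simp [Fin.tail]
  · intro a ha
    simp only
    rw [Fin.prod_univ_succ]
    simp [Fin.tail]

lemma fnr_one (m : ℕ) (hm : 1 ≤ m) : fnr m 1 = m ^ m := by
  unfold fnr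
  rw [Finset.Nat.antidiagonalTuple_one, Finset.filter_singleton]
  rw [if_pos ?_]
  · simp
  · intro j
    fin_cases j
    simpa using (show 0 < m by omega)

lemma fnr_zero_one : fnr 0 1 = 0 := by decide

lemma fnr_two_s17 (m : ℕ) : fnr m 2 = S2 m := by
  have h := fnr_succ m 1
  norm_num at h
  rw [h]
  rcases Nat.eq_zero_or_pos m with rfl | hm
  · simp [S2]
  · rw [Finset.sum_Ico_succ_top (by omega : 1 ≤ m), Nat.sub_self, fnr_zero_one,
      mul_zero, add_zero, S2]
    refine Finset.sum_congr rfl ?_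
    intro k hk
    simp only [Finset.mem_Ico] at hk
    rw [fnr_one (m-k) (by omega)]

/-! ### Main theorem -/

/-- For every `n ≥ 3`, `f(n, 3) < 6 (n-1)^{n-1}`. -/
theorem fnr_three_lt (n : ℕ) (hn : 3 ≤ n) : fnr n 3 < 6 * (n - 1) ^ (n - 1) := by
  have h3 : fnr n 3 = ∑ k ∈ Finset.Ico 1 (n+1), k ^ k * S2 (n-k) := by
    have h := fnr_succ n 2
    norm_num at h
    rw [h]
    exact Finset.sum_congr rfl fun k _ => by rw [fnr_two_s17]
  have hsub : ∑ k ∈ Finset.Ico 1 (n-1), k ^ k * S2 (n-k)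
      = ∑ k ∈ Finset.Ico 1 (n+1), k ^ k * S2 (n-k) := by
    refine Finset.sum_subset ?_ ?_
    · apply Finset.Ico_subset_Ico le_rfl
      omega
    · intro x hx hnx
      simp only [Finset.mem_Ico] at hx hnx
      have : n - x = 0 ∨ n - x = 1 := by omega
      rcases this with h | h <;> simp [h, S2]
  have hle : fnr n 3 ≤ 3 * S2 (n-1) := by
    rw [h3, ← hsub]
    have step1 : ∑ k ∈ Finset.Ico 1 (n-1), k ^ k * S2 (n-k)
        ≤ ∑ k ∈ Finset.Ico 1 (n-1), 3 * (k ^ k * ((n-1)-k) ^ ((n-1)-k)) := by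
      refine Finset.sum_le_sum ?_
      intro k hk
      have h := S2_le (n-k)
      have e : (n-k) - 1 = (n-1) - k := by omega
      rw [e] at h
      calc k ^ k * S2 (n-k) ≤ k ^ k * (3 * ((n-1)-k) ^ ((n-1)-k)) :=
            Nat.mul_le_mul_left _ h
        _ = 3 * (k ^ k * ((n-1)-k) ^ ((n-1)-k)) := by ring
    rw [← Finset.mul_sum] at step1
    exact step1
  have hS : S2 (n-1) ≤ 3 * (n-2)^(n-2) := by
    have := S2_le (n-1)
    have e : (n-1) - 1 = n - 2 := by omega
    rwa [e] at this
  have hfinal : 9 * (n-2)^(n-2) < 6 * (n-1)^(n-1) := by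
    obtain ⟨q, rfl⟩ : ∃ q, n = q + 3 := ⟨n - 3, by omega⟩
    have e1 : q + 3 - 2 = q + 1 := by omega
    have e2 : q + 3 - 1 = q + 2 := by omega
    rw [e1, e2]
    have h := two_mul_pow_le (q+1) (by omega)
    have e0 : q+1+1 = q+2 := by omega
    rw [e0] at h
    have hpos : 0 < (q+1)^(q+1) := pow_pos (by omega) _
    have : (q+2)^(q+2) = (q+2)^(q+1) * (q+2) := by
      rw [← pow_succ]
    calc 9 * (q+1)^(q+1) < 12 * (q+1)^(q+1) := by omega
      _ ≤ 6 * ((q+2)^(q+1)) := by omega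
      _ ≤ 6 * ((q+2)^(q+1) * (q+2)) := by
          have : (q+2)^(q+1) ≤ (q+2)^(q+1) * (q+2) := Nat.le_mul_of_pos_right _ (by omega)
          omega
      _ = 6 * (q+2)^(q+2) := by rw [← this]
  calc fnr n 3 ≤ 3 * S2 (n-1) := hle
    _ ≤ 3 * (3 * (n-2)^(n-2)) := Nat.mul_le_mul_left _ hS
    _ = 9 * (n-2)^(n-2) := by ring
    _ < 6 * (n-1)^(n-1) := hfinal
end
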